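/- Let P and P̃ be two Naimark extensions of the same POVM E = {E_i}, with projectors P_i on H' and P̃_i on H̃' ⊆ H', both compressing to E_i ⊕ 0 on the embedded subspace: Π_E P_i Π_E = E_i ⊕ 0 = Π_E P̃_i Π_E. Then for each i there exists a unitary Q_i on H' such that P_i Π_E = Q_i P̃_i Π_E, and there is a single block-diagonal unitary Q with P_i Π_E = Q P̃_i Π_E for all i. Consequently Δ[ρ ⊕ 0] = Q Δ̃[ρ ⊕ 0] Q† for every state ρ, so S(Δ[ρ ⊕ 0]) = S(Δ̃[ρ ⊕ 0]) and the relative entropy of POVM-based coherence is independent of the choice of Naimark extension. -/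

import Mathlib

open Matrix Kronecker Complex ComplexOrder

/-- Von Neumann entropy of a (Hermitian) matrix: S(ρ) = −Σ λ_i log λ_i over the
eigenvalues of ρ. -/
noncomputable def vN {ι : Type*} [Fintype ι] [DecidableEq ι]
    (ρ : Matrix ι ι ℂ) : ℝ :=
  if h : ρ.IsHermitian then ∑ i, Real.negMulLog (h.eigenvalues i) else 0

/-- Embedding X ↦ X ⊕ 0 of a d×d matrix into the upper-left corner of a
d'×d' matrix. -/
def emb {d d' : ℕ} (X : Matrix (Fin d) (Fin d) ℂ) : Matrix (Fin d') (Fin d') ℂ :=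
  fun i j => if hi : (i : ℕ) < d then if hj : (j : ℕ) < d then X ⟨i, hi⟩ ⟨j, hj⟩ else 0 else 0

section Aux

open Polynomial

theorem charpoly_conj {ι : Type*} [Fintype ι] [DecidableEq ι] (U M : Matrix ι ι ℂ)
    (hU : U * Uᴴ = 1) : (U * M * Uᴴ).charpoly = M.charpoly := by
  have hU' : Uᴴ * U = 1 := mul_eq_one_comm.mp hU
  unfold Matrix.charpoly
  have hone : (1 : Matrix ι ι ℂ).map (Polynomial.C) = 1 :=
    Matrix.map_one _ (map_zero _) (map_one _)
  have hcm : charmatrix (U * M * Uᴴ) =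
      U.map Polynomial.C * charmatrix M * Uᴴ.map Polynomial.C := by
    unfold charmatrix
    rw [mul_sub, sub_mul]
    congr 1
    · symm
      rw [mul_assoc,
        (Matrix.scalar_commute (X : ℂ[X]) (fun r => Commute.all _ r) _).eq,
        ← mul_assoc, ← Matrix.map_mul, hU, hone, one_mul]
    · simp only [RingHom.mapMatrix_apply, ← Matrix.map_mul]
  rw [hcm, Matrix.det_mul, Matrix.det_mul, mul_comm, ← mul_assoc, ← Matrix.det_mul,
    ← Matrix.map_mul, hU', hone, Matrix.det_one, one_mul]

theorem charpoly_herm {ι : Type*} [Fintype ι] [DecidableEq ι] {M : Matrix ι ι ℂ}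
    (hM : M.IsHermitian) :
    M.charpoly = ∏ i, (X - Polynomial.C (hM.eigenvalues i : ℂ)) := by
  have hVmem := hM.eigenvectorUnitary.2
  have hV : (hM.eigenvectorUnitary : Matrix ι ι ℂ) * (hM.eigenvectorUnitary : Matrix ι ι ℂ)ᴴ = 1 := by
    rw [← Matrix.star_eq_conjTranspose]
    exact Unitary.mul_star_self_of_mem hVmem
  conv_lhs => rw [hM.spectral_theorem]
  rw [Unitary.conjStarAlgAut_apply, Matrix.star_eq_conjTranspose, charpoly_conj _ _ hV]
  unfold Matrix.charpoly
  have : charmatrix (diagonal (RCLike.ofReal ∘ hM.eigenvalues) : Matrix ι ι ℂ) =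
      diagonal (fun i => (X - Polynomial.C (hM.eigenvalues i : ℂ))) := by
    ext i j
    by_cases h : i = j
    · subst h
      rw [charmatrix_apply_eq, diagonal_apply_eq]
      simp
    · rw [charmatrix_apply_ne _ _ _ h, diagonal_apply_ne _ h, diagonal_apply_ne _ h, map_zero,
        neg_zero]
  rw [this, det_diagonal]

theorem eig_multiset_conj {ι : Type*} [Fintype ι] [DecidableEq ι] {U M : Matrix ι ι ℂ}
    (hM : M.IsHermitian) (hU : U * Uᴴ = 1) (hM' : (U * M * Uᴴ).IsHermitian) :
    Finset.univ.val.map hM'.eigenvalues = Finset.univ.val.map hM.eigenvalues := by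
  have h := charpoly_conj U M hU
  rw [charpoly_herm hM, charpoly_herm hM'] at h
  have e1 : ∀ (f : ι → ℂ), ∏ i, (X - Polynomial.C (f i)) =
      ((Finset.univ.val.map f).map (fun z => X - Polynomial.C z)).prod := by
    intro f
    rw [Finset.prod_eq_multiset_prod, Multiset.map_map]
    rfl
  rw [e1, e1] at h
  have h4 := congrArg Polynomial.roots h
  rw [roots_multiset_prod_X_sub_C, roots_multiset_prod_X_sub_C] at h4
  have h5 : Multiset.map (fun x : ℝ => (x : ℂ)) (Finset.univ.val.map hM'.eigenvalues) =
      Multiset.map (fun x : ℝ => (x : ℂ)) (Finset.univ.val.map hM.eigenvalues) := by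
    rw [Multiset.map_map, Multiset.map_map]
    exact h4
  exact Multiset.map_injective (fun a b => by exact_mod_cast id) h5

theorem vN_conj {ι : Type*} [Fintype ι] [DecidableEq ι] {U M : Matrix ι ι ℂ}
    (hM : M.IsHermitian) (hU : Uᴴ * U = 1) : vN (U * M * Uᴴ) = vN M := by
  have hU' : U * Uᴴ = 1 := mul_eq_one_comm.mp hU
  have hM' : (U * M * Uᴴ).IsHermitian := by
    unfold Matrix.IsHermitian
    rw [conjTranspose_mul, conjTranspose_mul, conjTranspose_conjTranspose, hM.eq, mul_assoc]
  have key := eig_multiset_conj hM hU' hM'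
  rw [vN, vN, dif_pos hM', dif_pos hM]
  rw [Finset.sum_eq_multiset_sum, Finset.sum_eq_multiset_sum,
    show (Multiset.map (fun i => Real.negMulLog (hM'.eigenvalues i)) Finset.univ.val) =
      (Finset.univ.val.map hM'.eigenvalues).map Real.negMulLog by rw [Multiset.map_map]; rfl,
    show (Multiset.map (fun i => Real.negMulLog (hM.eigenvalues i)) Finset.univ.val) =
      (Finset.univ.val.map hM.eigenvalues).map Real.negMulLog by rw [Multiset.map_map]; rfl,
    key]

theorem onb_unitary {m : ℕ} (b : OrthonormalBasis (Fin m) ℂ (EuclideanSpace ℂ (Fin m))) :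
    (Matrix.of fun x j => b j x)ᴴ * (Matrix.of fun x j => b j x) = 1 := by
  ext j l
  have h := orthonormal_iff_ite.mp b.orthonormal j l
  simp only [PiLp.inner_apply, RCLike.inner_apply] at h
  simp only [Matrix.mul_apply, conjTranspose_apply, of_apply, Matrix.one_apply]
  simpa [mul_comm] using h

theorem exists_onb_cols {m : ℕ} {ι : Type*} [Fintype ι] [DecidableEq ι]
    (C : Matrix (Fin m) ι ℂ) (ev : ι → ℝ) (evnn : ∀ i, 0 ≤ ev i)
    (hCC : Cᴴ * C = diagonal (fun i => (ev i : ℂ)))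
    (e : {i : ι // ev i ≠ 0} ↪ Fin m) :
    ∃ b : OrthonormalBasis (Fin m) ℂ (EuclideanSpace ℂ (Fin m)),
      ∀ (i : ι) (hi : ev i ≠ 0) (x : Fin m),
        C x i = (Real.sqrt (ev i) : ℂ) * b (e ⟨i, hi⟩) x := by
  classical
  set col : ι → EuclideanSpace ℂ (Fin m) := fun i => WithLp.toLp 2 (fun x => C x i) with hcoldef
  have hinner : ∀ i j : ι, (inner ℂ (col i) (col j) : ℂ) = if i = j then (ev i : ℂ) else 0 := by
    intro i j
    have h : (Cᴴ * C) i j = diagonal (fun i => (ev i : ℂ)) i j := by rw [hCC]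
    rw [Matrix.mul_apply, diagonal_apply] at h
    simp only [PiLp.inner_apply, RCLike.inner_apply, hcoldef]
    simpa [conjTranspose_apply, mul_comm] using h
  set v : Fin m → EuclideanSpace ℂ (Fin m) := fun x =>
    if h : ∃ s : {i : ι // ev i ≠ 0}, e s = x then
      ((Real.sqrt (ev h.choose.1) : ℂ))⁻¹ • col h.choose.1 else 0 with hvdef
  have hv : ∀ t : {i : ι // ev i ≠ 0}, v (e t) = ((Real.sqrt (ev t.1) : ℂ))⁻¹ • col t.1 := by
    intro t
    have hex : ∃ s : {i : ι // ev i ≠ 0}, e s = e t := ⟨t, rfl⟩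
    have ht : hex.choose = t := e.injective hex.choose_spec
    simp only [hvdef, dif_pos hex, ht]
  have hsqrt : ∀ t : {i : ι // ev i ≠ 0}, Real.sqrt (ev t.1) ≠ 0 := by
    intro t
    exact Real.sqrt_ne_zero'.mpr (lt_of_le_of_ne (evnn t.1) (Ne.symm t.2))
  have horth : Orthonormal ℂ ((Set.range e).restrict v) := by
    rw [orthonormal_iff_ite]
    rintro ⟨x, hx⟩ ⟨y, hy⟩
    obtain ⟨tx, rfl⟩ := hx
    obtain ⟨ty, rfl⟩ := hy
    show inner ℂ (v (e tx)) (v (e ty)) = _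
    rw [hv tx, hv ty]
    rw [inner_smul_left, inner_smul_right, hinner]
    by_cases hxy : tx = ty
    · subst hxy
      rw [if_pos rfl, if_pos rfl]
      have hne : (Real.sqrt (ev tx.1) : ℂ) ≠ 0 := by exact_mod_cast hsqrt tx
      rw [← Complex.ofReal_inv, Complex.conj_ofReal, Complex.ofReal_inv]
      field_simp
      norm_cast
      rw [Real.sq_sqrt (evnn tx.1)]
    · rw [if_neg (fun h => hxy (Subtype.ext h)), mul_zero, mul_zero,
        if_neg (fun h => hxy (e.injective (Subtype.ext_iff.mp h)))]
  have hcard : Module.finrank ℂ (EuclideanSpace ℂ (Fin m)) = Fintype.card (Fin m) := by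
    simp [finrank_euclideanSpace]
  obtain ⟨b, hb⟩ := horth.exists_orthonormalBasis_extension_of_card_eq hcard
  refine ⟨b, fun i hi x => ?_⟩
  have hmem : e ⟨i, hi⟩ ∈ Set.range e := ⟨⟨i, hi⟩, rfl⟩
  rw [hb _ hmem, hv ⟨i, hi⟩]
  have : (((Real.sqrt (ev i) : ℂ))⁻¹ • col i) x = ((Real.sqrt (ev i) : ℂ))⁻¹ * C x i := rfl
  rw [this]
  have hs : (Real.sqrt (ev i) : ℂ) ≠ 0 := by
    exact_mod_cast hsqrt ⟨i, hi⟩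
  field_simp

theorem exists_unitary_of_gram {m : ℕ} {ι : Type*} [Fintype ι] [DecidableEq ι]
    (A B : Matrix (Fin m) ι ℂ) (hAB : Aᴴ * A = Bᴴ * B) :
    ∃ Q : Matrix (Fin m) (Fin m) ℂ, Qᴴ * Q = 1 ∧ A = Q * B := by
  classical
  have hpsd : (Aᴴ * A).PosSemidef := Matrix.posSemidef_conjTranspose_mul_self A
  have hH : (Aᴴ * A).IsHermitian := hpsd.1
  set ev : ι → ℝ := hH.eigenvalues with hevdef
  have evnn : ∀ i, 0 ≤ ev i := fun i => hpsd.eigenvalues_nonneg i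
  set V : Matrix ι ι ℂ := (hH.eigenvectorUnitary : Matrix ι ι ℂ) with hVdef
  have hVV : Vᴴ * V = 1 := by
    rw [hVdef, ← Matrix.star_eq_conjTranspose]
    exact Unitary.star_mul_self_of_mem hH.eigenvectorUnitary.2
  have hVV' : V * Vᴴ = 1 := mul_eq_one_comm.mp hVV
  have hdiag : Vᴴ * (Aᴴ * A) * V = diagonal (fun i => (ev i : ℂ)) := by
    rw [hVdef, ← Matrix.star_eq_conjTranspose]
    have := hH.conjStarAlgAut_star_eigenvectorUnitary
    rw [Unitary.conjStarAlgAut_star_apply] at this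
    exact this
  set C := A * V with hCdef
  set D := B * V with hDdef
  have hCC : Cᴴ * C = diagonal (fun i => (ev i : ℂ)) := by
    rw [hCdef, conjTranspose_mul, ← hdiag]
    simp only [Matrix.mul_assoc]
  have hDD : Dᴴ * D = diagonal (fun i => (ev i : ℂ)) := by
    rw [hDdef, conjTranspose_mul, ← hdiag, hAB]
    simp only [Matrix.mul_assoc]
  have hcard : Fintype.card {i : ι // ev i ≠ 0} ≤ Fintype.card (Fin m) := by
    rw [← hH.rank_eq_card_non_zero_eigs, Matrix.rank_conjTranspose_mul_self]
    exact Matrix.rank_le_card_height A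
  obtain ⟨e⟩ := Function.Embedding.nonempty_of_card_le hcard
  obtain ⟨b, hbC⟩ := exists_onb_cols C ev evnn hCC e
  obtain ⟨b', hbD⟩ := exists_onb_cols D ev evnn hDD e
  have hzero : ∀ (M : Matrix (Fin m) ι ℂ), Mᴴ * M = diagonal (fun i => (ev i : ℂ)) →
      ∀ i, ev i = 0 → ∀ x, M x i = 0 := by
    intro M hM i hi x
    have h : (Mᴴ * M) i i = 0 := by rw [hM, diagonal_apply_eq, hi, Complex.ofReal_zero]
    rw [Matrix.mul_apply] at h
    simp only [conjTranspose_apply] at h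
    have h2 : ((∑ y, Complex.normSq (M y i) : ℝ) : ℂ) = 0 := by
      push_cast
      rw [← h]
      symm
      exact Finset.sum_congr rfl fun y _ => by
        rw [show (star (M y i)) = (starRingEnd ℂ) (M y i) from rfl,
          ← Complex.normSq_eq_conj_mul_self]
    have h2' : ∑ y, Complex.normSq (M y i) = 0 := by exact_mod_cast h2
    have h3 := (Finset.sum_eq_zero_iff_of_nonneg
      (fun y _ => Complex.normSq_nonneg (M y i))).mp h2' x (Finset.mem_univ x)
    exact Complex.normSq_eq_zero.mp h3
  set UB : Matrix (Fin m) (Fin m) ℂ := Matrix.of (fun x j => b j x) with hUBdef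
  set UB' : Matrix (Fin m) (Fin m) ℂ := Matrix.of (fun x j => b' j x) with hUB'def
  have hUB : UBᴴ * UB = 1 := onb_unitary b
  have hUB' : UB'ᴴ * UB' = 1 := onb_unitary b'
  have hUBc : UB * UBᴴ = 1 := mul_eq_one_comm.mp hUB
  have hUB'c : UB' * UB'ᴴ = 1 := mul_eq_one_comm.mp hUB'
  refine ⟨UB * UB'ᴴ, ?_, ?_⟩
  · rw [conjTranspose_mul, conjTranspose_conjTranspose, mul_assoc, ← mul_assoc UBᴴ, hUB,
      one_mul, hUB'c]
  have hQD : UB * UB'ᴴ * D = C := by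
    have hmid : UB'ᴴ * D = Matrix.of (fun j i =>
        if h : ev i ≠ 0 then (if j = e ⟨i, h⟩ then (Real.sqrt (ev i) : ℂ) else 0) else 0) := by
      ext j i
      rw [Matrix.mul_apply]
      by_cases h : ev i ≠ 0
      · simp only [of_apply, dif_pos h]
        have : ∀ y, UB'ᴴ j y * D y i =
            (Real.sqrt (ev i) : ℂ) * ((starRingEnd ℂ) (b' j y) * b' (e ⟨i, h⟩) y) := by
          intro y
          rw [hbD i h y, conjTranspose_apply, hUB'def, of_apply,
            show (star (b' j y) : ℂ) = (starRingEnd ℂ) (b' j y) from rfl]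
          ring
        rw [Finset.sum_congr rfl (fun y _ => this y), ← Finset.mul_sum]
        have hip := orthonormal_iff_ite.mp b'.orthonormal j (e ⟨i, h⟩)
        simp only [PiLp.inner_apply, RCLike.inner_apply] at hip
        rw [show (∑ y, (starRingEnd ℂ) (b' j y) * b' (e ⟨i, h⟩) y) = ∑ y, b' (e ⟨i, h⟩) y * (starRingEnd ℂ) (b' j y) from Finset.sum_congr rfl fun _ _ => mul_comm _ _, hip]
        simp [mul_ite]
      · push_neg at h
        simp only [of_apply, dif_neg (not_not.mpr h)]
        apply Finset.sum_eq_zero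
        intro y _
        rw [hzero D hDD i h y, mul_zero]
    rw [Matrix.mul_assoc, hmid]
    ext x i
    rw [Matrix.mul_apply]
    by_cases h : ev i ≠ 0
    · simp only [of_apply, dif_pos h]
      rw [Finset.sum_eq_single (e ⟨i, h⟩)]
      · rw [if_pos rfl, hUBdef, of_apply, hbC i h x]
        ring
      · intro y _ hy
        rw [if_neg hy, mul_zero]
      · intro hy
        exact absurd (Finset.mem_univ _) hy
    · push_neg at h
      simp only [of_apply, dif_neg (not_not.mpr h)]
      rw [hzero C hCC i h x]
      apply Finset.sum_eq_zero
      intro y _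
      rw [mul_zero]
  calc A = A * (V * Vᴴ) := by rw [hVV', Matrix.mul_one]
    _ = C * Vᴴ := by rw [hCdef, Matrix.mul_assoc]
    _ = UB * UB'ᴴ * D * Vᴴ := by rw [hQD]
    _ = UB * UB'ᴴ * (B * (V * Vᴴ)) := by rw [hDdef]; simp only [Matrix.mul_assoc]
    _ = UB * UB'ᴴ * B := by rw [hVV', Matrix.mul_one]

theorem emb_mul {d d' : ℕ} (hd : d ≤ d') (X Y : Matrix (Fin d) (Fin d) ℂ) :
    (emb X : Matrix (Fin d') (Fin d') ℂ) * emb Y = emb (X * Y) := by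
  ext i j
  rw [Matrix.mul_apply]
  by_cases hi : (i : ℕ) < d
  · by_cases hj : (j : ℕ) < d
    · rw [show (∑ k : Fin d', emb X i k * emb Y k j) =
          ∑ k ∈ Finset.univ.map (Fin.castLEEmb hd), emb X i k * emb Y k j by
        symm
        apply Finset.sum_subset (Finset.subset_univ _)
        intro k _ hk
        have hkd : ¬ ((k : ℕ) < d) := by
          intro hlt
          exact hk (Finset.mem_map.mpr ⟨⟨(k : ℕ), hlt⟩, Finset.mem_univ _, Fin.ext rfl⟩)
        simp [emb, hkd]]
      rw [Finset.sum_map]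
      simp only [emb, dif_pos hi, dif_pos hj, Matrix.mul_apply]
      apply Finset.sum_congr rfl
      intro k _
      have hk : ((Fin.castLEEmb hd k : Fin d') : ℕ) < d := by simp
      have h1 : (⟨((Fin.castLEEmb hd k : Fin d') : ℕ), hk⟩ : Fin d) = k := Fin.ext (by simp)
      simp only [dif_pos hk, h1]
    · simp only [emb, dif_pos hi, dif_neg hj]
      apply Finset.sum_eq_zero
      intro k _
      by_cases hk : (k : ℕ) < d <;> simp [hk, hj]
  · simp only [emb, dif_neg hi]
    apply Finset.sum_eq_zero
    intro k _
    simp [dif_neg hi]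

theorem emb_conjTranspose {d d' : ℕ} (X : Matrix (Fin d) (Fin d) ℂ) :
    (emb X : Matrix (Fin d') (Fin d') ℂ)ᴴ = emb Xᴴ := by
  ext i j
  simp only [conjTranspose_apply, emb]
  by_cases hi : (i : ℕ) < d <;> by_cases hj : (j : ℕ) < d <;> simp [hi, hj]

end Aux

/-- If P and P̃ are two Naimark extensions of the same POVM {E_i},
both compressing to E_i ⊕ 0 on the embedded subspace (Π P_i Π = E_i ⊕ 0 = Π P̃_i Π,
Π = 1_d ⊕ 0), then for each i there is a unitary Q_i with P_i Π = Q_i P̃_i Π, and a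
single unitary Q with P_i Π = Q P̃_i Π for all i; consequently
Δ[ρ⊕0] = Q Δ̃[ρ⊕0] Q† and S(Δ[ρ⊕0]) = S(Δ̃[ρ⊕0]) for every state ρ, so the relative
entropy of POVM-based coherence does not depend on the chosen Naimark extension. -/
theorem naimark_independence (d d' n : ℕ) (hd : d ≤ d')
    (E : Fin n → Matrix (Fin d) (Fin d) ℂ)
    (hpos : ∀ i, (E i).PosSemidef) (hsumE : ∑ i, E i = 1)
    (P Pt : Fin n → Matrix (Fin d') (Fin d') ℂ)
    (hPHerm : ∀ i, (P i).IsHermitian)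
    (hPorth : ∀ i j, P i * P j = if i = j then P i else 0)
    (hPsum : ∑ i, P i = 1)
    (hPtHerm : ∀ i, (Pt i).IsHermitian)
    (hPtorth : ∀ i j, Pt i * Pt j = if i = j then Pt i else 0)
    (hPtsub : (∑ i, Pt i) * (emb (1 : Matrix (Fin d) (Fin d) ℂ)) =
      emb (1 : Matrix (Fin d) (Fin d) ℂ))
    (hcomp : ∀ i, (emb (1 : Matrix (Fin d) (Fin d) ℂ)) * P i *
      (emb (1 : Matrix (Fin d) (Fin d) ℂ)) = emb (E i))
    (hcompt : ∀ i, (emb (1 : Matrix (Fin d) (Fin d) ℂ)) * Pt i *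
      (emb (1 : Matrix (Fin d) (Fin d) ℂ)) = emb (E i)) :
    (∀ i, ∃ Qi : Matrix (Fin d') (Fin d') ℂ, Qiᴴ * Qi = 1 ∧
      P i * emb (1 : Matrix (Fin d) (Fin d) ℂ) =
        Qi * (Pt i * emb (1 : Matrix (Fin d) (Fin d) ℂ))) ∧
    ∃ Q : Matrix (Fin d') (Fin d') ℂ, Qᴴ * Q = 1 ∧
      (∀ i, P i * emb (1 : Matrix (Fin d) (Fin d) ℂ) =
        Q * (Pt i * emb (1 : Matrix (Fin d) (Fin d) ℂ))) ∧
      (∀ ρ : Matrix (Fin d) (Fin d) ℂ, ρ.PosSemidef → ρ.trace = 1 →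
        (∑ i, P i * emb ρ * P i) = Q * (∑ i, Pt i * emb ρ * Pt i) * Qᴴ ∧
        vN (∑ i, P i * emb ρ * P i) = vN (∑ i, Pt i * emb ρ * Pt i)) := by
  classical
  set Pr : Matrix (Fin d') (Fin d') ℂ := emb (1 : Matrix (Fin d) (Fin d) ℂ) with hPrdef
  have hPrH : Prᴴ = Pr := by
    rw [hPrdef, emb_conjTranspose, conjTranspose_one]
  have hGram : ∀ i j, (P i * Pr)ᴴ * (P j * Pr) = (Pt i * Pr)ᴴ * (Pt j * Pr) := by
    intro i j
    rw [conjTranspose_mul, conjTranspose_mul, hPrH, (hPHerm i).eq, (hPtHerm i).eq]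
    have e1 : Pr * P i * (P j * Pr) = Pr * (P i * P j) * Pr := by
      simp only [Matrix.mul_assoc]
    have e2 : Pr * Pt i * (Pt j * Pr) = Pr * (Pt i * Pt j) * Pr := by
      simp only [Matrix.mul_assoc]
    rw [e1, e2, hPorth, hPtorth]
    by_cases h : i = j
    · subst h
      rw [if_pos rfl, if_pos rfl, hcomp i, hcompt i]
    · rw [if_neg h, if_neg h]
  obtain ⟨Q, hQ, hAQB⟩ := exists_unitary_of_gram
    (Matrix.of fun x (p : Fin n × Fin d') => (P p.1 * Pr) x p.2)
    (Matrix.of fun x (p : Fin n × Fin d') => (Pt p.1 * Pr) x p.2)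
    (by
      ext p q
      have h := Matrix.ext_iff.mpr (hGram p.1 q.1) p.2 q.2
      simp only [Matrix.mul_apply, conjTranspose_apply, Matrix.of_apply] at h ⊢
      exact h)
  have hblock : ∀ i, P i * Pr = Q * (Pt i * Pr) := by
    intro i
    ext x k
    have h := Matrix.ext_iff.mpr hAQB x (i, k)
    simp only [Matrix.mul_apply, Matrix.of_apply] at h ⊢
    exact h
  refine ⟨fun i => ⟨Q, hQ, hblock i⟩, Q, hQ, hblock, ?_⟩
  intro ρ hρ _
  have hembρ : Pr * emb ρ * Pr = emb ρ := by
    rw [hPrdef, emb_mul hd, emb_mul hd, one_mul, mul_one]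
  have hρH : (emb ρ : Matrix (Fin d') (Fin d') ℂ)ᴴ = emb ρ := by
    rw [emb_conjTranspose, hρ.1.eq]
  have hterm : ∀ i, P i * emb ρ * P i = Q * (Pt i * emb ρ * Pt i) * Qᴴ := by
    intro i
    have h1 : P i * emb ρ * P i = P i * (Pr * emb ρ * Pr) * P i := by rw [hembρ]
    have h2 : P i * (Pr * emb ρ * Pr) * P i = (P i * Pr) * emb ρ * (Pr * P i) := by
      simp only [Matrix.mul_assoc]
    have h3 : Pr * P i = (P i * Pr)ᴴ := by
      rw [conjTranspose_mul, hPrH, (hPHerm i).eq]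
    rw [h1, h2, h3, hblock i]
    rw [conjTranspose_mul]
    have h4 : (Pt i * Pr)ᴴ = Pr * Pt i := by
      rw [conjTranspose_mul, hPrH, (hPtHerm i).eq]
    rw [h4]
    have h5 : Pt i * emb ρ * Pt i = Pt i * (Pr * emb ρ * Pr) * Pt i := by rw [hembρ]
    rw [h5]
    simp only [Matrix.mul_assoc]
  have hsum : (∑ i, P i * emb ρ * P i) = Q * (∑ i, Pt i * emb ρ * Pt i) * Qᴴ := by
    rw [Finset.mul_sum, Finset.sum_mul]
    exact Finset.sum_congr rfl fun i _ => hterm i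
  refine ⟨hsum, ?_⟩
  have hHerm : (∑ i, Pt i * emb ρ * Pt i).IsHermitian := by
    unfold Matrix.IsHermitian
    rw [Matrix.conjTranspose_sum]
    apply Finset.sum_congr rfl
    intro i _
    rw [conjTranspose_mul, conjTranspose_mul, (hPtHerm i).eq, hρH]
    simp only [Matrix.mul_assoc]
  rw [hsum]
  exact vN_conj hHerm hQ
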